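/- If α is an element of S_6 of cycle type (3,3), written α = ab with a, b disjoint 3-cycles, then the 3-cycles c such that α·c is a 3-cycle are exactly a⁻¹ and b⁻¹. -/

import Mathlib

open Equiv Equiv.Perm Finset

private lemma fix_of_not_mem {g : Equiv.Perm (Fin 6)} {y : Fin 6}
    (h : y ∉ g.support) : g⁻¹ y = y :=
  Equiv.Perm.notMem_support.mp (by rwa [Equiv.Perm.support_inv])

private lemma key6 (a b : Equiv.Perm (Fin 6))
    (ha : a.IsThreeCycle) (hdisj : a.Disjoint b)
    (c : Equiv.Perm (Fin 6)) (hc : c.IsThreeCycle)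
    (hmem : ∀ y ∈ c.support, c y = (a * b)⁻¹ y)
    (x : Fin 6) (hx : x ∈ c.support) (hxa : x ∈ a.support) : c = a⁻¹ := by
  have hinv : ∀ y ∈ a.support, a⁻¹ y ∈ a.support := by
    intro y hy
    rw [← Equiv.Perm.support_inv a] at hy ⊢
    exact Equiv.Perm.apply_mem_support.2 hy
  -- on support of a, (a*b)⁻¹ acts as a⁻¹
  have hab : ∀ y ∈ a.support, (a * b)⁻¹ y = a⁻¹ y := by
    intro y hy
    have h1 : a⁻¹ y ∈ a.support := hinv y hy
    have h2 : a⁻¹ y ∉ b.support := Finset.disjoint_left.mp hdisj.disjoint_support h1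
    rw [mul_inv_rev]
    simp only [Equiv.Perm.mul_apply]
    exact fix_of_not_mem h2
  -- the three points x, a⁻¹ x, a⁻¹ (a⁻¹ x) lie in both supports
  have hx1 : a⁻¹ x ∈ a.support := hinv x hxa
  have hx2 : a⁻¹ (a⁻¹ x) ∈ a.support := hinv _ hx1
  have hcx : a⁻¹ x ∈ c.support := by
    have := hmem x hx
    rw [hab x hxa] at this
    rw [← this]
    exact Equiv.Perm.apply_mem_support.2 hx
  have hcx2 : a⁻¹ (a⁻¹ x) ∈ c.support := by
    have := hmem _ hcx
    rw [hab _ hx1] at this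
    rw [← this]
    exact Equiv.Perm.apply_mem_support.2 hcx
  -- the three points are distinct
  have ha3 : a ^ 3 = 1 := by
    rw [← ha.orderOf]; exact pow_orderOf_eq_one a
  have hne1 : a⁻¹ x ≠ x := by
    intro h
    apply Equiv.Perm.mem_support.mp hxa
    have := congrArg a h
    simpa using this.symm
  have hne2 : a⁻¹ (a⁻¹ x) ≠ a⁻¹ x := by
    intro h
    exact hne1 (a⁻¹.injective h)
  have hne3 : a⁻¹ (a⁻¹ x) ≠ x := by
    intro h
    -- then a⁻¹ has order dividing ... a² x = x hence a x = x
    have h2 : a (a x) = x := by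
      have := congrArg (a * a) h
      simpa [Equiv.Perm.mul_apply] using this.symm
    have h3 : a x = x := by
      have h4 : a (a (a x)) = a x := congrArg a h2
      have h5 : a (a (a x)) = x := by
        have := congrArg (fun g : Equiv.Perm (Fin 6) => g x) ha3
        simpa [pow_succ, Equiv.Perm.mul_apply] using this
      rw [h5] at h4; exact h4.symm
    exact Equiv.Perm.mem_support.mp hxa h3
  -- supports are equal
  have hS : ({x, a⁻¹ x, a⁻¹ (a⁻¹ x)} : Finset (Fin 6)) ⊆ c.support ∩ a.support := by
    intro y hy
    simp only [Finset.mem_insert, Finset.mem_singleton] at hy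
    rcases hy with rfl | rfl | rfl <;> exact Finset.mem_inter.2 ⟨by assumption, by assumption⟩
  have hcard : ({x, a⁻¹ x, a⁻¹ (a⁻¹ x)} : Finset (Fin 6)).card = 3 := by
    rw [Finset.card_insert_of_notMem (by simp only [Finset.mem_insert, Finset.mem_singleton, not_or]; exact ⟨hne1.symm, hne3.symm⟩),
      Finset.card_insert_of_notMem (by simp only [Finset.mem_singleton]; exact hne2.symm), Finset.card_singleton]
  have hsupp : c.support = a.support := by
    have e1 : ({x, a⁻¹ x, a⁻¹ (a⁻¹ x)} : Finset (Fin 6)) = c.support :=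
      Finset.eq_of_subset_of_card_le (hS.trans Finset.inter_subset_left)
        (by rw [hc.card_support, hcard])
    have e2 : ({x, a⁻¹ x, a⁻¹ (a⁻¹ x)} : Finset (Fin 6)) = a.support :=
      Finset.eq_of_subset_of_card_le (hS.trans Finset.inter_subset_right)
        (by rw [ha.card_support, hcard])
    rw [← e1, e2]
  ext y
  by_cases hy : y ∈ a.support
  · rw [← hab y hy, ← hmem y (hsupp ▸ hy)]
  · rw [Equiv.Perm.notMem_support.mp (hsupp ▸ hy : y ∉ c.support), fix_of_not_mem hy]

/-- If `α` is an element of `S₆` of cycle type `(3,3)`, written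
`α = a·b` with `a, b` disjoint 3-cycles, then the 3-cycles `c` such that `α·c`
is a 3-cycle are exactly `a⁻¹` and `b⁻¹`. -/
theorem three_cycles_giving_three_cycle_with_type_33
    (a b : Equiv.Perm (Fin 6))
    (ha : a.IsThreeCycle) (hb : b.IsThreeCycle) (hdisj : a.Disjoint b)
    (c : Equiv.Perm (Fin 6)) :
    (c.IsThreeCycle ∧ ((a * b) * c).IsThreeCycle) ↔ (c = a⁻¹ ∨ c = b⁻¹) := by
  have hcomm : a * b = b * a := hdisj.commute.eq
  constructor
  · rintro ⟨hc, habc⟩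
    -- support of a*b is everything
    have hsuppab : (a * b).support = Finset.univ := by
      apply Finset.eq_univ_of_card
      rw [hdisj.support_mul, Finset.card_union_of_disjoint hdisj.disjoint_support,
        ha.card_support, hb.card_support]
      simp
    -- supports of c and (a*b)*c cover everything
    have hcover : c.support ∪ ((a * b) * c).support = Finset.univ := by
      apply Finset.eq_univ_of_forall
      intro y
      by_contra hy
      simp only [Finset.mem_union, not_or] at hy
      have h1 : c y = y := Equiv.Perm.notMem_support.mp hy.1
      have h2 : ((a * b) * c) y = y := Equiv.Perm.notMem_support.mp hy.2
      rw [Equiv.Perm.mul_apply, h1] at h2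
      exact (Equiv.Perm.mem_support.mp (hsuppab ▸ Finset.mem_univ y)) h2
    -- hence disjoint supports
    have hdisj2 : Disjoint c.support ((a * b) * c).support := by
      rw [Finset.disjoint_iff_inter_eq_empty, ← Finset.card_eq_zero]
      have := Finset.card_union_add_card_inter c.support ((a * b) * c).support
      rw [hcover, hc.card_support, habc.card_support] at this
      simpa using this
    have hmem : ∀ y ∈ c.support, c y = (a * b)⁻¹ y := by
      intro y hy
      have : ((a * b) * c) y = y :=
        Equiv.Perm.notMem_support.mp (Finset.disjoint_left.mp hdisj2 hy)
      apply (a * b).injective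
      rw [← Equiv.Perm.mul_apply (a * b) (a * b)⁻¹, mul_inv_cancel, Equiv.Perm.one_apply, ← Equiv.Perm.mul_apply]
      exact this
    obtain ⟨x, hx⟩ := Finset.card_pos.mp (by rw [hc.card_support]; norm_num)
    have hxab : x ∈ a.support ∪ b.support := by
      rw [← hdisj.support_mul, hsuppab]; exact Finset.mem_univ x
    rcases Finset.mem_union.mp hxab with hxa | hxb
    · exact Or.inl (key6 a b ha hdisj c hc hmem x hx hxa)
    · refine Or.inr (key6 b a hb hdisj.symm c hc ?_ x hx hxb)
      intro y hy
      rw [hmem y hy, hcomm]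
  · rintro (rfl | rfl)
    · refine ⟨ha.inv, ?_⟩
      rw [hcomm, mul_assoc, mul_inv_cancel, mul_one]
      exact hb
    · refine ⟨hb.inv, ?_⟩
      rw [mul_assoc, mul_inv_cancel, mul_one]
      exact ha
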